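/- arXiv:2307.05149 — 4 statements merged into one kernel-verified Lean document; each statement's English description precedes it below -/
import Mathlib

section
/- Let I be a finite (or summable) index set in ℕ², and for each multi-index α let E_α = exp(-ρ·α) be its error contribution and ϖ_α = exp(ḡ·α) + exp(ḡ̄·α) its work contribution, for fixed vectors ρ, ḡ, ḡ̄ ∈ ℝ². Define the level set I(v) = {α ∈ ℕ² : E_α/ϖ_α ≥ v}. Then I(v) is optimal in the following sense: for any other index set Ī ⊆ ℕ² with the same total error, i.e. ∑_{α∉I(v)} E_α = ∑_{α∉Ī} E_α (both sums assumed convergent), the total work satisfies ∑_{α∈I(v)} ϖ_α ≤ ∑_{α∈Ī} ϖ_α. -/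
open Real

/-- Dot product of a vector in ℝ² with a multi-index in ℕ². -/
noncomputable def dot2 (v : ℝ × ℝ) (α : ℕ × ℕ) : ℝ := v.1 * α.1 + v.2 * α.2

private lemma split_tsum (f : ℕ × ℕ → ℝ) (s t : Set (ℕ × ℕ))
    (h1 : Summable (fun α : (s ∩ t : Set (ℕ × ℕ)) => f α))
    (h2 : Summable (fun α : (s \ t : Set (ℕ × ℕ)) => f α)) :
    ∑' α : s, f α
      = ∑' α : (s ∩ t : Set (ℕ × ℕ)), f α + ∑' α : (s \ t : Set (ℕ × ℕ)), f α := by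
  rw [← Summable.tsum_union_disjoint (disjoint_sdiff_self_right.mono_left Set.inter_subset_right) h1 h2,
    Set.inter_union_diff]

/-- Optimality of the profit level set: among all index sets with the same total
(tail) error, the level set `I(v) = {α : E α / ϖ α ≥ v}` has minimal total work. -/
theorem stmt0 (ρ g gg : ℝ × ℝ) (v : ℝ)
    (E ϖ : ℕ × ℕ → ℝ)
    (hE : ∀ α, E α = Real.exp (-(dot2 ρ α)))
    (hϖ : ∀ α, ϖ α = Real.exp (dot2 g α) + Real.exp (dot2 gg α))
    (Iv : Set (ℕ × ℕ)) (hIv : Iv = {α | v ≤ E α / ϖ α})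
    (Ibar : Set (ℕ × ℕ))
    (hEsum : Summable E)
    (hWIv : Summable (fun α : Iv => ϖ α))
    (hWIbar : Summable (fun α : Ibar => ϖ α))
    (heq : ∑' α : (Ivᶜ : Set (ℕ × ℕ)), E α = ∑' α : (Ibarᶜ : Set (ℕ × ℕ)), E α) :
    ∑' α : Iv, ϖ α ≤ ∑' α : Ibar, ϖ α := by
  have hEpos : ∀ α, 0 < E α := fun α => by rw [hE]; exact Real.exp_pos _
  have hϖpos : ∀ α, 0 < ϖ α := fun α => by
    rw [hϖ]; positivity
  have subsum : ∀ (s t : Set (ℕ × ℕ)), t ⊆ s → Summable (fun α : s => ϖ α) →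
      Summable (fun α : t => ϖ α) := by
    intro s t hts hs
    have hs2 : Summable (s.indicator ϖ) := summable_subtype_iff_indicator.mp hs
    refine summable_subtype_iff_indicator.mpr
      (Summable.of_nonneg_of_le
        (fun α => Set.indicator_nonneg (fun a _ => (hϖpos a).le) α) (fun α => ?_) hs2)
    exact Set.indicator_le_indicator_of_subset hts (fun a => (hϖpos a).le) α
  have hEsub : ∀ s : Set (ℕ × ℕ), Summable (fun α : s => E α) :=
    fun s => hEsum.subtype s
  by_cases hv : 0 < v
  · -- summabilities of pieces
    have sIvI : Summable (fun α : (Iv ∩ Ibar : Set (ℕ × ℕ)) => ϖ α) :=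
      subsum Iv _ Set.inter_subset_left hWIv
    have sIvD : Summable (fun α : (Iv \ Ibar : Set (ℕ × ℕ)) => ϖ α) :=
      subsum Iv _ Set.diff_subset hWIv
    have sIbI : Summable (fun α : (Ibar ∩ Iv : Set (ℕ × ℕ)) => ϖ α) :=
      subsum Ibar _ Set.inter_subset_left hWIbar
    have sIbD : Summable (fun α : (Ibar \ Iv : Set (ℕ × ℕ)) => ϖ α) :=
      subsum Ibar _ Set.diff_subset hWIbar
    -- equal in-set errors
    have h1 : ∑' α : Iv, E α = ∑' α : Ibar, E α := by
      have a1 := Summable.tsum_add_tsum_compl (f := E) (s := Iv) (hEsub Iv) (hEsub Ivᶜ)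
      have a2 := Summable.tsum_add_tsum_compl (f := E) (s := Ibar) (hEsub Ibar) (hEsub Ibarᶜ)
      linarith
    have e1 := split_tsum E Iv Ibar (hEsub _) (hEsub _)
    have e2 := split_tsum E Ibar Iv (hEsub _) (hEsub _)
    have hcomm : (Iv ∩ Ibar : Set (ℕ × ℕ)) = Ibar ∩ Iv := Set.inter_comm _ _
    have key : ∑' α : (Iv \ Ibar : Set (ℕ × ℕ)), E α
        = ∑' α : (Ibar \ Iv : Set (ℕ × ℕ)), E α := by
      rw [e1, e2, hcomm] at h1
      linarith
    -- termwise bounds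
    have hA : v * ∑' α : (Iv \ Ibar : Set (ℕ × ℕ)), ϖ α
        ≤ ∑' α : (Iv \ Ibar : Set (ℕ × ℕ)), E α := by
      rw [← tsum_mul_left]
      refine Summable.tsum_le_tsum (fun α => ?_) (sIvD.mul_left v) (hEsub _)
      have hmem : v ≤ E ↑α / ϖ ↑α := hIv.subset α.2.1
      exact (le_div_iff₀ (hϖpos α)).mp hmem
    have hB : ∑' α : (Ibar \ Iv : Set (ℕ × ℕ)), E α
        ≤ v * ∑' α : (Ibar \ Iv : Set (ℕ × ℕ)), ϖ α := by
      rw [← tsum_mul_left]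
      refine Summable.tsum_le_tsum (fun α => ?_) (hEsub _) (sIbD.mul_left v)
      have hmem : ¬ v ≤ E ↑α / ϖ ↑α := fun hc => α.2.2 (hIv.symm.subset hc)
      exact ((div_lt_iff₀ (hϖpos α)).mp (lt_of_not_ge hmem)).le
    have hle : ∑' α : (Iv \ Ibar : Set (ℕ × ℕ)), ϖ α
        ≤ ∑' α : (Ibar \ Iv : Set (ℕ × ℕ)), ϖ α := by
      refine le_of_mul_le_mul_left ?_ hv
      linarith
    have w1 := split_tsum ϖ Iv Ibar sIvI sIvD
    have w2 := split_tsum ϖ Ibar Iv sIbI sIbD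
    rw [hcomm] at w1
    linarith
  · -- v ≤ 0 : Iv = univ, and then Ibar = univ too
    have hv' : v ≤ 0 := not_lt.mp hv
    have hIvuniv : Iv = Set.univ := by
      rw [hIv]
      ext α
      simp only [Set.mem_setOf_eq, Set.mem_univ, iff_true]
      exact hv'.trans (div_pos (hEpos α) (hϖpos α)).le
    have hzero : ∑' α : (Ibarᶜ : Set (ℕ × ℕ)), E α = 0 := by
      rw [← heq, hIvuniv]
      simp
    have hIbc : (Ibarᶜ : Set (ℕ × ℕ)) = ∅ := by
      by_contra h
      obtain ⟨α, hα⟩ := Set.nonempty_iff_ne_empty.mpr h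
      have hle : E α ≤ ∑' β : (Ibarᶜ : Set (ℕ × ℕ)), E β :=
        Summable.le_tsum (hEsub Ibarᶜ) ⟨α, hα⟩ (fun β _ => (hEpos β).le)
      have := hEpos α
      rw [hzero] at hle
      linarith
    have hIbar : Ibar = Set.univ := by
      rw [← compl_compl Ibar, hIbc, Set.compl_empty]
    rw [hIvuniv, hIbar]
end

section
/- Under the constrained optimization of the previous context, the minimal total cost subject to ∑_{α∈I}(V₁_α/M₁_α + V₂_α/(M₁_α M₂_α)) ≤ ε² satisfies min W ≤ ε^{-2} ( ∑_{α∈I} ( √(V₁_α C₁_α) + √(V₂_α C₂_α) ) )², where C₁_α = N_α^{γ₂} P_α^{1+γ₁} and C₂_α = N_α^{γ₂} P_α^{γ₁} are the per-sample costs of the outer and inner loops. -/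
open Real

/-- The minimal total cost of the double loop Monte Carlo estimator subject to
the variance constraint `∑ (V₁_α/M₁_α + V₂_α/(M₁_α M₂_α)) ≤ ε²` is at most
`ε⁻² (∑ (√(V₁_α C₁_α) + √(V₂_α C₂_α)))²`, where `C₁_α = N_α^γ₂ P_α^{1+γ₁}` and
`C₂_α = N_α^γ₂ P_α^γ₁`. -/
theorem stmt4 {ι : Type*} (I : Finset ι)
    (P N V₁ V₂ C₁ C₂ : ι → ℝ) (γ₁ γ₂ ε : ℝ)
    (hP : ∀ α ∈ I, 0 < P α) (hN : ∀ α ∈ I, 0 < N α)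
    (hV₁ : ∀ α ∈ I, 0 < V₁ α) (hV₂ : ∀ α ∈ I, 0 < V₂ α)
    (hγ₁ : 0 < γ₁) (hγ₂ : 0 < γ₂) (hε : 0 < ε)
    (hC₁ : ∀ α ∈ I, C₁ α = N α ^ γ₂ * P α ^ (1 + γ₁))
    (hC₂ : ∀ α ∈ I, C₂ α = N α ^ γ₂ * P α ^ γ₁) :
    ∃ M₁ M₂ : ι → ℝ, (∀ α ∈ I, 0 < M₁ α) ∧ (∀ α ∈ I, 0 < M₂ α) ∧
      (∑ α ∈ I, (V₁ α / M₁ α + V₂ α / (M₁ α * M₂ α)) ≤ ε ^ 2) ∧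
      (∑ α ∈ I, (M₁ α * C₁ α + M₁ α * M₂ α * C₂ α) ≤
        ε⁻¹ ^ 2 * (∑ α ∈ I, (Real.sqrt (V₁ α * C₁ α) + Real.sqrt (V₂ α * C₂ α))) ^ 2) := by
  have hC₁pos : ∀ α ∈ I, 0 < C₁ α := fun α hα => by
    rw [hC₁ α hα]
    exact mul_pos (Real.rpow_pos_of_pos (hN α hα) _) (Real.rpow_pos_of_pos (hP α hα) _)
  have hC₂pos : ∀ α ∈ I, 0 < C₂ α := fun α hα => by
    rw [hC₂ α hα]
    exact mul_pos (Real.rpow_pos_of_pos (hN α hα) _) (Real.rpow_pos_of_pos (hP α hα) _)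
  set S := ∑ α ∈ I, (Real.sqrt (V₁ α * C₁ α) + Real.sqrt (V₂ α * C₂ α)) with hSdef
  rcases I.eq_empty_or_nonempty with rfl | hne
  · exact ⟨1, 1, by simp, by simp, by simpa using sq_nonneg ε, by simp; positivity⟩
  have hSpos : 0 < S := Finset.sum_pos (fun α hα => by
    have h1 := hV₁ α hα; have h2 := hC₁pos α hα
    have : 0 < Real.sqrt (V₁ α * C₁ α) := Real.sqrt_pos.mpr (mul_pos h1 h2)
    have h3 : 0 ≤ Real.sqrt (V₂ α * C₂ α) := Real.sqrt_nonneg _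
    linarith) hne
  refine ⟨fun α => ε⁻¹ ^ 2 * S * (Real.sqrt (V₁ α) / Real.sqrt (C₁ α)),
    fun α => Real.sqrt (V₂ α) * Real.sqrt (C₁ α) / (Real.sqrt (C₂ α) * Real.sqrt (V₁ α)),
    ?_, ?_, ?_, ?_⟩
  · intro α hα
    have h1 := hV₁ α hα; have h2 := hC₁pos α hα
    have := Real.sqrt_pos.mpr h1; have := Real.sqrt_pos.mpr h2
    positivity
  · intro α hα
    have h1 := hV₁ α hα; have h2 := hC₁pos α hα
    have h3 := hV₂ α hα; have h4 := hC₂pos α hα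
    have := Real.sqrt_pos.mpr h1; have := Real.sqrt_pos.mpr h2
    have := Real.sqrt_pos.mpr h3; have := Real.sqrt_pos.mpr h4
    positivity
  · have key : ∀ α ∈ I, V₁ α / (ε⁻¹ ^ 2 * S * (Real.sqrt (V₁ α) / Real.sqrt (C₁ α)))
        + V₂ α / (ε⁻¹ ^ 2 * S * (Real.sqrt (V₁ α) / Real.sqrt (C₁ α)) *
          (Real.sqrt (V₂ α) * Real.sqrt (C₁ α) / (Real.sqrt (C₂ α) * Real.sqrt (V₁ α))))
        = ε ^ 2 / S * (Real.sqrt (V₁ α * C₁ α) + Real.sqrt (V₂ α * C₂ α)) := by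
      intro α hα
      have h1 := hV₁ α hα; have h2 := hC₁pos α hα
      have h3 := hV₂ α hα; have h4 := hC₂pos α hα
      have s1 : (0:ℝ) < Real.sqrt (V₁ α) := Real.sqrt_pos.mpr h1
      have s2 : (0:ℝ) < Real.sqrt (C₁ α) := Real.sqrt_pos.mpr h2
      have s3 : (0:ℝ) < Real.sqrt (V₂ α) := Real.sqrt_pos.mpr h3
      have s4 : (0:ℝ) < Real.sqrt (C₂ α) := Real.sqrt_pos.mpr h4
      rw [Real.sqrt_mul h1.le, Real.sqrt_mul h3.le]
      rw [show V₁ α = Real.sqrt (V₁ α) * Real.sqrt (V₁ α) from (Real.mul_self_sqrt h1.le).symm,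
        show V₂ α = Real.sqrt (V₂ α) * Real.sqrt (V₂ α) from (Real.mul_self_sqrt h3.le).symm]
      generalize Real.sqrt (V₁ α) = a at s1 ⊢
      generalize Real.sqrt (C₁ α) = b at s2 ⊢
      generalize Real.sqrt (V₂ α) = c at s3 ⊢
      generalize Real.sqrt (C₂ α) = d at s4 ⊢
      field_simp
      rw [Real.sqrt_sq s1.le, Real.sqrt_sq s3.le]
      ring
    rw [Finset.sum_congr rfl key, ← Finset.mul_sum, ← hSdef, div_mul_cancel₀]
    exact hSpos.ne'
  · have key : ∀ α ∈ I, ε⁻¹ ^ 2 * S * (Real.sqrt (V₁ α) / Real.sqrt (C₁ α)) * C₁ α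
        + ε⁻¹ ^ 2 * S * (Real.sqrt (V₁ α) / Real.sqrt (C₁ α)) *
          (Real.sqrt (V₂ α) * Real.sqrt (C₁ α) / (Real.sqrt (C₂ α) * Real.sqrt (V₁ α))) * C₂ α
        = ε⁻¹ ^ 2 * S * (Real.sqrt (V₁ α * C₁ α) + Real.sqrt (V₂ α * C₂ α)) := by
      intro α hα
      have h1 := hV₁ α hα; have h2 := hC₁pos α hα
      have h3 := hV₂ α hα; have h4 := hC₂pos α hα
      have s1 : (0:ℝ) < Real.sqrt (V₁ α) := Real.sqrt_pos.mpr h1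
      have s2 : (0:ℝ) < Real.sqrt (C₁ α) := Real.sqrt_pos.mpr h2
      have s3 : (0:ℝ) < Real.sqrt (V₂ α) := Real.sqrt_pos.mpr h3
      have s4 : (0:ℝ) < Real.sqrt (C₂ α) := Real.sqrt_pos.mpr h4
      rw [Real.sqrt_mul h1.le, Real.sqrt_mul h3.le]
      rw [show C₁ α = Real.sqrt (C₁ α) * Real.sqrt (C₁ α) from (Real.mul_self_sqrt h2.le).symm,
        show C₂ α = Real.sqrt (C₂ α) * Real.sqrt (C₂ α) from (Real.mul_self_sqrt h4.le).symm]
      generalize Real.sqrt (V₁ α) = a at s1 ⊢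
      generalize Real.sqrt (C₁ α) = b at s2 ⊢
      generalize Real.sqrt (V₂ α) = c at s3 ⊢
      generalize Real.sqrt (C₂ α) = d at s4 ⊢
      field_simp
      rw [Real.sqrt_sq s2.le, Real.sqrt_sq s4.le]
      ring
    rw [Finset.sum_congr rfl key, ← Finset.mul_sum, ← hSdef, sq S]
    exact le_of_eq (by ring)
end

section
/- Let M̂₁_α = ⌈M₁_α⌉ and M̂₂_α = ⌈M̃_α/⌈M₁_α⌉⌉ where M̃_α = M₁_α M₂_α, for positive reals M₁_α, M₂_α. Then the cost with rounded sample sizes satisfies ∑_α (M̂₁_α C₁_α + M̂₁_α M̂₂_α C₂_α) ≤ 2 W₁ + W₂ + W₃ + W₄, where W₁ = ∑_α (M₁_α C₁_α + M̃_α C₂_α), W₂ = ∑_α (C₁_α + C₂_α), W₃ = ∑_α M₁_α C₂_α, W₄ = ∑_α (M̃_α/⌈M₁_α⌉) C₂_α; moreover if C₂_α ≤ C₁_α for all α then W₃ ≤ W₁ and W₄ ≤ W₁, hence the total rounded cost is at most 4 W₁ + W₂. -/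
/-- Rounding the real-valued optimal sample sizes up to integers
(`M̂₁_α = ⌈M₁_α⌉`, `M̂₂_α = ⌈M̃_α/⌈M₁_α⌉⌉` with `M̃_α = M₁_α M₂_α`) increases
the total cost by at most `2W₁ + W₂ + W₃ + W₄`; moreover if `C₂_α ≤ C₁_α` for
all `α`, then `W₃ ≤ W₁` and `W₄ ≤ W₁`, so the rounded cost is at most
`4W₁ + W₂`. -/
theorem stmt5 {ι : Type*} (I : Finset ι)
    (C₁ C₂ M₁ M₂ Mt : ι → ℝ)
    (hC₁ : ∀ α ∈ I, 0 < C₁ α) (hC₂ : ∀ α ∈ I, 0 < C₂ α)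
    (hM₁ : ∀ α ∈ I, 0 < M₁ α) (hM₂ : ∀ α ∈ I, 0 < M₂ α)
    (hMt : ∀ α ∈ I, Mt α = M₁ α * M₂ α)
    (W₁ W₂ W₃ W₄ : ℝ)
    (hW₁ : W₁ = ∑ α ∈ I, (M₁ α * C₁ α + Mt α * C₂ α))
    (hW₂ : W₂ = ∑ α ∈ I, (C₁ α + C₂ α))
    (hW₃ : W₃ = ∑ α ∈ I, M₁ α * C₂ α)
    (hW₄ : W₄ = ∑ α ∈ I, (Mt α / (⌈M₁ α⌉₊ : ℝ)) * C₂ α) :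
    (∑ α ∈ I, ((⌈M₁ α⌉₊ : ℝ) * C₁ α +
        (⌈M₁ α⌉₊ : ℝ) * (⌈Mt α / (⌈M₁ α⌉₊ : ℝ)⌉₊ : ℝ) * C₂ α) ≤
      2 * W₁ + W₂ + W₃ + W₄) ∧
    ((∀ α ∈ I, C₂ α ≤ C₁ α) → W₃ ≤ W₁ ∧ W₄ ≤ W₁ ∧
      ∑ α ∈ I, ((⌈M₁ α⌉₊ : ℝ) * C₁ α +
        (⌈M₁ α⌉₊ : ℝ) * (⌈Mt α / (⌈M₁ α⌉₊ : ℝ)⌉₊ : ℝ) * C₂ α) ≤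
      4 * W₁ + W₂) := by
  -- Key pointwise bound: rounded term ≤ M₁C₁ + C₁ + MtC₂ + M₁C₂ + C₂
  have key : ∀ α ∈ I, (⌈M₁ α⌉₊ : ℝ) * C₁ α +
      (⌈M₁ α⌉₊ : ℝ) * (⌈Mt α / (⌈M₁ α⌉₊ : ℝ)⌉₊ : ℝ) * C₂ α ≤
      (M₁ α * C₁ α + C₁ α) + (Mt α * C₂ α + M₁ α * C₂ α + C₂ α) := by
    intro α hα
    have hm := hM₁ α hα
    have hmt : 0 < Mt α := by rw [hMt α hα]; exact mul_pos hm (hM₂ α hα)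
    have hc1 := hC₁ α hα
    have hc2 := hC₂ α hα
    have hcpos : (0:ℝ) < (⌈M₁ α⌉₊ : ℝ) := by
      exact_mod_cast Nat.ceil_pos.mpr hm
    have hc : (⌈M₁ α⌉₊ : ℝ) ≤ M₁ α + 1 :=
      le_of_lt (Nat.ceil_lt_add_one hm.le)
    have hq : (0:ℝ) ≤ Mt α / (⌈M₁ α⌉₊ : ℝ) := by positivity
    have hc2' : (⌈Mt α / (⌈M₁ α⌉₊ : ℝ)⌉₊ : ℝ) ≤ Mt α / (⌈M₁ α⌉₊ : ℝ) + 1 :=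
      le_of_lt (Nat.ceil_lt_add_one hq)
    have h2 : (⌈M₁ α⌉₊ : ℝ) * (⌈Mt α / (⌈M₁ α⌉₊ : ℝ)⌉₊ : ℝ) ≤
        Mt α + (M₁ α + 1) := by
      calc (⌈M₁ α⌉₊ : ℝ) * (⌈Mt α / (⌈M₁ α⌉₊ : ℝ)⌉₊ : ℝ)
          ≤ (⌈M₁ α⌉₊ : ℝ) * (Mt α / (⌈M₁ α⌉₊ : ℝ) + 1) := by
            exact mul_le_mul_of_nonneg_left hc2' hcpos.le
        _ = Mt α + (⌈M₁ α⌉₊ : ℝ) := by field_simp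
        _ ≤ Mt α + (M₁ α + 1) := by linarith
    nlinarith [mul_le_mul_of_nonneg_right hc hc1.le,
      mul_le_mul_of_nonneg_right h2 hc2.le]
  have hsum : ∑ α ∈ I, ((⌈M₁ α⌉₊ : ℝ) * C₁ α +
      (⌈M₁ α⌉₊ : ℝ) * (⌈Mt α / (⌈M₁ α⌉₊ : ℝ)⌉₊ : ℝ) * C₂ α) ≤
      W₁ + W₂ + W₃ := by
    have := Finset.sum_le_sum key
    rw [hW₁, hW₂, hW₃, ← Finset.sum_add_distrib, ← Finset.sum_add_distrib]
    refine this.trans (le_of_eq (Finset.sum_congr rfl fun α hα => by ring))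
  have hW₁0 : 0 ≤ W₁ := by
    rw [hW₁]
    refine Finset.sum_nonneg fun α hα => ?_
    have hmt : 0 < Mt α := by
      rw [hMt α hα]; exact mul_pos (hM₁ α hα) (hM₂ α hα)
    nlinarith [hC₁ α hα, hC₂ α hα, hM₁ α hα]
  have hW₄0 : 0 ≤ W₄ := by
    rw [hW₄]
    refine Finset.sum_nonneg fun α hα => ?_
    have hmt : 0 < Mt α := by
      rw [hMt α hα]; exact mul_pos (hM₁ α hα) (hM₂ α hα)
    exact mul_nonneg (div_nonneg hmt.le (Nat.cast_nonneg _)) (hC₂ α hα).le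
  constructor
  · linarith
  · intro hle
    have h3 : W₃ ≤ W₁ := by
      rw [hW₃, hW₁]
      refine Finset.sum_le_sum fun α hα => ?_
      have hmt : 0 < Mt α := by
        rw [hMt α hα]; exact mul_pos (hM₁ α hα) (hM₂ α hα)
      nlinarith [hC₂ α hα, hM₁ α hα, hle α hα]
    have h4 : W₄ ≤ W₁ := by
      rw [hW₄, hW₁]
      refine Finset.sum_le_sum fun α hα => ?_
      have hm := hM₁ α hα
      have hmt : 0 < Mt α := by
        rw [hMt α hα]; exact mul_pos hm (hM₂ α hα)
      have hcpos : (1:ℝ) ≤ (⌈M₁ α⌉₊ : ℝ) := by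
        exact_mod_cast Nat.one_le_ceil_iff.mpr hm
      have : Mt α / (⌈M₁ α⌉₊ : ℝ) ≤ Mt α := by
        rw [div_le_iff₀ (by linarith)]; nlinarith
      nlinarith [hC₂ α hα, hC₁ α hα, mul_pos hm (hC₁ α hα)]
    exact ⟨h3, h4, by linarith⟩
end

section
/- In the isotropic case γ₁ = γ₂ = γ > 0, w₁ = w₂ = s₁ = s₂ = s > 0, b₁ = b₂ = b > 0, with the condition 2b ≥ s, the multi-index DLMC work bound W(TOL) ≲ TOL^{-2} ( ∑_{α∈I(L(TOL))} τ^{α₁(1+γ-s)/2 + α₂(γ-s)/2} + τ^{α₁(γ-s)/2 + α₂(γ-s)/2} )² satisfies, as TOL → 0: W(TOL) = O(TOL^{-2}) if s > 1+γ; W(TOL) = O(TOL^{-2} (log TOL^{-1})²) if s = 1+γ; and W(TOL) = O(TOL^{-2-(1+γ-s)/b}) if s < 1+γ, where the level L(TOL) is chosen minimally so that the geometric bias bound Q_B ∑_{α∉I(L)} τ^{-b(α₁+α₂)} ≤ TOL holds. -/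
open Real Filter Topology

namespace Stmt12

lemma rpow_mul_nat {τ : ℝ} (hτ : 0 < τ) (r : ℝ) (n : ℕ) : τ ^ (r * n) = (τ ^ r) ^ n := by
  rw [← Real.rpow_natCast (τ ^ r) n, ← Real.rpow_mul hτ.le]

lemma geo_summable {τ : ℝ} (hτ : 1 < τ) {r : ℝ} (hr : r < 0) :
    Summable (fun n : ℕ => τ ^ (r * n)) := by
  have h0 : (0:ℝ) < τ := lt_trans one_pos hτ
  have he : (fun n : ℕ => τ ^ (r * n)) = fun n : ℕ => (τ ^ r) ^ n := by
    funext n; exact rpow_mul_nat h0 r n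
  rw [he]
  exact summable_geometric_of_lt_one (Real.rpow_nonneg h0.le r)
    (Real.rpow_lt_one_of_one_lt_of_neg hτ hr)

lemma geo_tsum {τ : ℝ} (hτ : 1 < τ) {r : ℝ} (hr : r < 0) :
    ∑' n : ℕ, τ ^ (r * n) = (1 - τ ^ r)⁻¹ := by
  have h0 : (0:ℝ) < τ := lt_trans one_pos hτ
  have he : (fun n : ℕ => τ ^ (r * n)) = fun n : ℕ => (τ ^ r) ^ n := by
    funext n; exact rpow_mul_nat h0 r n
  rw [he]
  exact tsum_geometric_of_lt_one (Real.rpow_nonneg h0.le r)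
    (Real.rpow_lt_one_of_one_lt_of_neg hτ hr)

lemma geo_inv_pos {τ : ℝ} (hτ : 1 < τ) {r : ℝ} (hr : r < 0) : 0 < (1 - τ ^ r)⁻¹ := by
  have h2 : 0 < 1 - τ ^ r := by
    have := Real.rpow_lt_one_of_one_lt_of_neg hτ hr; linarith
  positivity

/-- geometric tail bound over any set of naturals bounded below by `x`. -/
lemma geo_tail {τ : ℝ} (hτ : 1 < τ) {r : ℝ} (hr : r < 0) (x : ℝ) (s : Set ℕ)
    (hs : ∀ n ∈ s, x ≤ (n : ℝ)) :
    ∑' n : s, τ ^ (r * (n : ℕ)) ≤ τ ^ (r * x) * (1 - τ ^ r)⁻¹ := by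
  have h0 : (0:ℝ) < τ := lt_trans one_pos hτ
  have hsum := geo_summable hτ hr
  have hinv := geo_inv_pos hτ hr
  rcases le_or_gt x 0 with hx | hx
  · calc ∑' n : s, τ ^ (r * (n : ℕ))
        ≤ ∑' n : ℕ, τ ^ (r * n) :=
          Summable.tsum_subtype_le (fun n : ℕ => τ ^ (r * n)) s
            (fun n => (Real.rpow_pos_of_pos h0 _).le) hsum
      _ = 1 * (1 - τ ^ r)⁻¹ := by rw [one_mul, geo_tsum hτ hr]
      _ ≤ τ ^ (r * x) * (1 - τ ^ r)⁻¹ := by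
          apply mul_le_mul_of_nonneg_right _ hinv.le
          exact Real.one_le_rpow hτ.le (by nlinarith)
  · set m := ⌈x⌉₊ with hm
    have hxm : x ≤ (m : ℝ) := Nat.le_ceil x
    have hmem : ∀ n : s, m ≤ (n : ℕ) := fun n => Nat.ceil_le.mpr (hs n n.2)
    have he : (fun c : ℕ => τ ^ (r * ((c : ℝ) + m))) =
        fun c : ℕ => τ ^ (r * m) * τ ^ (r * c) := by
      funext c; rw [← Real.rpow_add h0]; ring_nf
    have hg : Summable (fun c : ℕ => τ ^ (r * ((c : ℝ) + m))) := by
      rw [he]; exact (geo_summable hτ hr).mul_left _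
    have key : ∑' n : s, τ ^ (r * (n : ℕ)) ≤ ∑' c : ℕ, τ ^ (r * ((c : ℝ) + m)) := by
      apply Summable.tsum_le_tsum_of_inj (fun n : s => (n : ℕ) - m)
      · intro n1 n2 h
        have h1 := hmem n1; have h2 := hmem n2
        have h' : (n1 : ℕ) - m = (n2 : ℕ) - m := h
        have : (n1 : ℕ) = (n2 : ℕ) := by omega
        exact Subtype.ext this
      · intro c _; exact (Real.rpow_pos_of_pos h0 _).le
      · intro n
        have h1 := hmem n
        have hc : (((n : ℕ) - m : ℕ) : ℝ) + m = ((n : ℕ) : ℝ) := by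
          push_cast [Nat.cast_sub h1]; ring
        rw [hc]
      · exact hsum.subtype _
      · exact hg
    have hval : ∑' c : ℕ, τ ^ (r * ((c : ℝ) + m)) = τ ^ (r * m) * (1 - τ ^ r)⁻¹ := by
      rw [he, tsum_mul_left, geo_tsum hτ hr]
    refine key.trans ?_
    rw [hval]
    apply mul_le_mul_of_nonneg_right _ hinv.le
    rw [Real.rpow_le_rpow_left_iff hτ]
    nlinarith

/-- geometric growth bound over a set of naturals bounded above by `x`. -/
lemma geo_init {τ : ℝ} (hτ : 1 < τ) {r : ℝ} (hr : 0 < r) (x : ℝ) (hx : 0 ≤ x) (s : Set ℕ)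
    (hs : ∀ n ∈ s, (n : ℝ) ≤ x) :
    ∑' n : s, τ ^ (r * (n : ℕ)) ≤ τ ^ (r * (x + 1)) * (τ ^ r - 1)⁻¹ := by
  have h0 : (0:ℝ) < τ := lt_trans one_pos hτ
  have hρ : 1 < τ ^ r := Real.one_lt_rpow_iff_of_pos h0 |>.mpr (Or.inl ⟨hτ, hr⟩)
  have hρ1 : (0:ℝ) < τ ^ r - 1 := by linarith
  set m := ⌊x⌋₊ with hm
  have hsm : ∀ n ∈ s, n < m + 1 := fun n hn => Nat.lt_succ_of_le (Nat.le_floor (hs n hn))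
  have hzero : ∀ n ∉ Finset.range (m + 1), s.indicator (fun n : ℕ => τ ^ (r * n)) n = 0 := by
    intro n hn
    apply Set.indicator_of_notMem
    intro hns
    exact hn (Finset.mem_range.mpr (hsm n hns))
  calc ∑' n : s, τ ^ (r * (n : ℕ))
      = ∑' n : ℕ, s.indicator (fun n : ℕ => τ ^ (r * n)) n :=
        tsum_subtype s (fun n : ℕ => τ ^ (r * n))
    _ = ∑ n ∈ Finset.range (m + 1), s.indicator (fun n : ℕ => τ ^ (r * n)) n :=
        tsum_eq_sum hzero
    _ ≤ ∑ n ∈ Finset.range (m + 1), τ ^ (r * (n : ℕ)) := by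
        apply Finset.sum_le_sum
        intro i _
        exact Set.indicator_le_self' (fun n _ => (Real.rpow_pos_of_pos h0 _).le) i
    _ = ∑ n ∈ Finset.range (m + 1), (τ ^ r) ^ n := by
        apply Finset.sum_congr rfl; intro i _; exact rpow_mul_nat h0 r i
    _ = ((τ ^ r) ^ (m + 1) - 1) / (τ ^ r - 1) := geom_sum_eq (ne_of_gt hρ) (m + 1)
    _ ≤ (τ ^ r) ^ (m + 1) / (τ ^ r - 1) := by
        apply (div_le_div_iff_of_pos_right hρ1).mpr; linarith
    _ ≤ τ ^ (r * (x + 1)) * (τ ^ r - 1)⁻¹ := by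
        rw [div_eq_mul_inv]
        apply mul_le_mul_of_nonneg_right _ (by positivity)
        rw [← rpow_mul_nat h0]
        rw [Real.rpow_le_rpow_left_iff hτ]
        have h1 : (m : ℝ) ≤ x := Nat.floor_le hx
        have hc : ((m + 1 : ℕ) : ℝ) = (m : ℝ) + 1 := by push_cast; ring
        rw [hc]
        nlinarith

/-- counting bound -/
lemma count_bound {c x : ℝ} (hc : 0 ≤ c) (hx : 0 ≤ x) (s : Set ℕ)
    (hs : ∀ n ∈ s, (n : ℝ) ≤ x) :
    ∑' _ : s, c ≤ c * (x + 1) := by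
  set m := ⌊x⌋₊ with hm
  have hsm : ∀ n ∈ s, n < m + 1 := fun n hn => Nat.lt_succ_of_le (Nat.le_floor (hs n hn))
  have hzero : ∀ n ∉ Finset.range (m + 1), s.indicator (fun _ : ℕ => c) n = 0 := by
    intro n hn
    apply Set.indicator_of_notMem
    intro hns
    exact hn (Finset.mem_range.mpr (hsm n hns))
  calc ∑' _ : s, c
      = ∑' n : ℕ, s.indicator (fun _ : ℕ => c) n := tsum_subtype s (fun _ : ℕ => c)
    _ = ∑ n ∈ Finset.range (m + 1), s.indicator (fun _ : ℕ => c) n := tsum_eq_sum hzero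
    _ ≤ ∑ _n ∈ Finset.range (m + 1), c := by
        apply Finset.sum_le_sum
        intro i _
        exact Set.indicator_le_self' (fun n _ => hc) i
    _ = (m + 1 : ℕ) * c := by rw [Finset.sum_const, Finset.card_range, nsmul_eq_mul]
    _ ≤ c * (x + 1) := by
        rw [mul_comm]
        apply mul_le_mul_of_nonneg_left _ hc
        have h1 : (m : ℝ) ≤ x := Nat.floor_le hx
        push_cast
        linarith

/-- Fubini-type bound: sum over ℕ×ℕ bounded via column sums. -/
lemma fubini_le {f : ℕ × ℕ → ℝ} (hf : Summable f)
    (g : ℕ → ℝ) (hg : Summable g)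
    (hle : ∀ a2 : ℕ, ∑' a1 : ℕ, f (a1, a2) ≤ g a2) :
    ∑' p : ℕ × ℕ, f p ≤ ∑' a2, g a2 := by
  have hswap : Summable (fun p : ℕ × ℕ => f p.swap) := hf.prod_symm
  have h1 : ∑' p : ℕ × ℕ, f p.swap = ∑' p : ℕ × ℕ, f p := by
    simpa using (Equiv.prodComm ℕ ℕ).tsum_eq f
  rw [← h1]
  have h2 : ∑' p : ℕ × ℕ, f p.swap = ∑' a2, ∑' a1, f (a1, a2) := by
    rw [Summable.tsum_prod' hswap (fun b => hswap.prod_factor b)]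
    rfl
  rw [h2]
  apply Summable.tsum_le_tsum hle _ hg
  exact (hswap.hasSum.prod_fiberwise (fun b => (hswap.prod_factor b).hasSum)).summable

lemma tsum_set_le_fubini {f : ℕ × ℕ → ℝ} (hf0 : ∀ p, 0 ≤ f p) (S : Set (ℕ × ℕ))
    (hfs : Summable (S.indicator f)) (g : ℕ → ℝ) (hg : Summable g)
    (hle : ∀ a2 : ℕ, (∑' a1 : {n : ℕ | (n, a2) ∈ S}, f (a1, a2)) ≤ g a2) :
    ∑' p : S, f p ≤ ∑' a2, g a2 := by
  rw [tsum_subtype S f]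
  apply fubini_le hfs g hg
  intro a2
  have hcong : ∀ a1 : ℕ, S.indicator f (a1, a2)
      = Set.indicator {n : ℕ | (n, a2) ∈ S} (fun n => f (n, a2)) a1 := by
    intro a1
    by_cases h : (a1, a2) ∈ S
    · rw [Set.indicator_of_mem h,
        Set.indicator_of_mem (show a1 ∈ {n : ℕ | (n, a2) ∈ S} from h)]
    · rw [Set.indicator_of_notMem h,
        Set.indicator_of_notMem (show a1 ∉ {n : ℕ | (n, a2) ∈ S} from h)]
  calc ∑' a1 : ℕ, S.indicator f (a1, a2)
      = ∑' a1 : ℕ, Set.indicator {n : ℕ | (n, a2) ∈ S} (fun n => f (n, a2)) a1 :=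
        tsum_congr hcong
    _ = ∑' a1 : {n : ℕ | (n, a2) ∈ S}, f (a1, a2) :=
        (tsum_subtype {n : ℕ | (n, a2) ∈ S} (fun n => f (n, a2))).symm
    _ ≤ g a2 := hle a2

lemma prod_summable {τ : ℝ} (hτ : 1 < τ) {u v : ℝ} (hu : u < 0) (hv : v < 0) :
    Summable (fun p : ℕ × ℕ => τ ^ (u * p.1 + v * p.2)) := by
  have h0 : (0:ℝ) < τ := lt_trans one_pos hτ
  have he : (fun p : ℕ × ℕ => τ ^ (u * p.1 + v * p.2))
      = fun p : ℕ × ℕ => (fun n : ℕ => τ ^ (u * n)) p.1 * (fun n : ℕ => τ ^ (v * n)) p.2 := by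
    funext p; rw [Real.rpow_add h0]
  rw [he]
  exact (geo_summable hτ hu).mul_of_nonneg (geo_summable hτ hv)
    (fun n => (Real.rpow_pos_of_pos h0 _).le) (fun n => (Real.rpow_pos_of_pos h0 _).le)

lemma prod_tsum {τ : ℝ} (hτ : 1 < τ) {u v : ℝ} (hu : u < 0) (hv : v < 0) :
    ∑' p : ℕ × ℕ, τ ^ (u * p.1 + v * p.2) = (1 - τ ^ u)⁻¹ * (1 - τ ^ v)⁻¹ := by
  have h0 : (0:ℝ) < τ := lt_trans one_pos hτ
  have hsum := prod_summable hτ hu hv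
  rw [Summable.tsum_prod' hsum (fun b => hsum.prod_factor b)]
  have hinner : ∀ a : ℕ, ∑' b : ℕ, τ ^ (u * a + v * b) = τ ^ (u * a) * (1 - τ ^ v)⁻¹ := by
    intro a
    have he : (fun b : ℕ => τ ^ (u * a + v * b)) = fun b : ℕ => τ ^ (u * a) * τ ^ (v * b) := by
      funext b; rw [Real.rpow_add h0]
    rw [he, tsum_mul_left, geo_tsum hτ hv]
  calc ∑' (a : ℕ) (b : ℕ), τ ^ (u * a + v * b)
      = ∑' a : ℕ, τ ^ (u * a) * (1 - τ ^ v)⁻¹ := tsum_congr hinner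
    _ = (1 - τ ^ u)⁻¹ * (1 - τ ^ v)⁻¹ := by rw [tsum_mul_right, geo_tsum hτ hu]

/-- Case s > 1+γ : uniform bound. -/
lemma sum_bound_neg {τ u v : ℝ} (hτ : 1 < τ) (hu : u < 0) (hv : v < 0) (S : Set (ℕ × ℕ)) :
    ∑' p : S, τ ^ (u * ((p : ℕ × ℕ).1 : ℝ) + v * ((p : ℕ × ℕ).2 : ℝ))
      ≤ (1 - τ ^ u)⁻¹ * (1 - τ ^ v)⁻¹ := by
  have h0 : (0:ℝ) < τ := lt_trans one_pos hτ
  calc ∑' p : S, τ ^ (u * ((p : ℕ × ℕ).1 : ℝ) + v * ((p : ℕ × ℕ).2 : ℝ))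
      ≤ ∑' p : ℕ × ℕ, τ ^ (u * (p.1 : ℝ) + v * (p.2 : ℝ)) :=
        Summable.tsum_subtype_le (fun p : ℕ × ℕ => τ ^ (u * (p.1 : ℝ) + v * (p.2 : ℝ))) S
          (fun p => (Real.rpow_pos_of_pos h0 _).le) (prod_summable hτ hu hv)
    _ = (1 - τ ^ u)⁻¹ * (1 - τ ^ v)⁻¹ := prod_tsum hτ hu hv

/-- finiteness of constrained sets -/
lemma set_finite {δ1 δ2 L : ℝ} (hδ1 : 0 < δ1) (hδ2 : 0 < δ2)
    (S : Set (ℕ × ℕ)) (hS : ∀ p ∈ S, δ1 * p.1 + δ2 * p.2 ≤ L) : S.Finite := by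
  apply Set.Finite.subset (Set.Finite.prod (Set.finite_Iic (⌊L / δ1⌋₊)) (Set.finite_Iic (⌊L / δ2⌋₊)))
  intro p hp
  have h := hS p hp
  have h1 : (p.1 : ℝ) ≤ L / δ1 := by
    rw [le_div_iff₀ hδ1]
    have : (0:ℝ) ≤ δ2 * p.2 := by positivity
    nlinarith
  have h2 : (p.2 : ℝ) ≤ L / δ2 := by
    rw [le_div_iff₀ hδ2]
    have : (0:ℝ) ≤ δ1 * p.1 := by positivity
    nlinarith
  exact ⟨Nat.le_floor h1, Nat.le_floor h2⟩

/-- Case s < 1+γ : geometric growth bound. -/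
lemma sum_bound_pos {τ w1 w2 δ1 δ2 : ℝ} (hτ : 1 < τ) (hw1 : 0 < w1)
    (hδ1 : 0 < δ1) (hδ2 : 0 < δ2) (hrel : w2 * δ1 < w1 * δ2) :
    ∃ C : ℝ, 0 < C ∧ ∀ L : ℝ, 0 ≤ L → ∀ S : Set (ℕ × ℕ),
      (∀ p ∈ S, δ1 * p.1 + δ2 * p.2 ≤ L) →
      ∑' p : S, τ ^ (w1 * ((p : ℕ × ℕ).1 : ℝ) + w2 * ((p : ℕ × ℕ).2 : ℝ))
        ≤ C * τ ^ (w1 / δ1 * L) := by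
  have h0 : (0:ℝ) < τ := lt_trans one_pos hτ
  have hρ : 1 < τ ^ w1 := Real.one_lt_rpow_iff_of_pos h0 |>.mpr (Or.inl ⟨hτ, hw1⟩)
  have hρ1 : (0:ℝ) < τ ^ w1 - 1 := by linarith
  have hr2 : w2 - w1 * δ2 / δ1 < 0 := by
    rw [sub_neg, lt_div_iff₀ hδ1]; linarith
  refine ⟨τ ^ w1 * (τ ^ w1 - 1)⁻¹ * (1 - τ ^ (w2 - w1 * δ2 / δ1))⁻¹,
    mul_pos (mul_pos (Real.rpow_pos_of_pos h0 _) (inv_pos.mpr hρ1)) (geo_inv_pos hτ hr2), ?_⟩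
  intro L hL S hS
  set F := fun p : ℕ × ℕ => τ ^ (w1 * (p.1 : ℝ) + w2 * (p.2 : ℝ)) with hF
  have hSfin : S.Finite := set_finite hδ1 hδ2 S hS
  have hfs : Summable (S.indicator F) :=
    summable_of_finite_support (hSfin.subset Set.support_indicator_subset)
  set g := fun a2 : ℕ => τ ^ (w2 * (a2 : ℝ)) *
      (τ ^ (w1 * ((L - δ2 * a2) / δ1 + 1)) * (τ ^ w1 - 1)⁻¹) with hg
  have hgform : g = fun a2 : ℕ =>
      (τ ^ w1 * (τ ^ w1 - 1)⁻¹ * τ ^ (w1 / δ1 * L)) * τ ^ ((w2 - w1 * δ2 / δ1) * a2) := by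
    funext a2
    rw [hg]
    have he : w2 * (a2:ℝ) + w1 * ((L - δ2 * a2) / δ1 + 1)
        = w1 + w1 / δ1 * L + (w2 - w1 * δ2 / δ1) * a2 := by
      field_simp; ring
    calc τ ^ (w2 * (a2:ℝ)) * (τ ^ (w1 * ((L - δ2 * a2) / δ1 + 1)) * (τ ^ w1 - 1)⁻¹)
        = τ ^ (w2 * (a2:ℝ) + w1 * ((L - δ2 * a2) / δ1 + 1)) * (τ ^ w1 - 1)⁻¹ := by
          rw [Real.rpow_add h0]; ring
      _ = τ ^ (w1 + w1 / δ1 * L + (w2 - w1 * δ2 / δ1) * a2) * (τ ^ w1 - 1)⁻¹ := by rw [he]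
      _ = (τ ^ w1 * (τ ^ w1 - 1)⁻¹ * τ ^ (w1 / δ1 * L)) * τ ^ ((w2 - w1 * δ2 / δ1) * a2) := by
          rw [Real.rpow_add h0, Real.rpow_add h0]; ring
  have hgsum : Summable g := by
    rw [hgform]; exact (geo_summable hτ hr2).mul_left _
  have hmain : ∑' p : S, F p ≤ ∑' a2, g a2 := by
    apply tsum_set_le_fubini (fun p => (Real.rpow_pos_of_pos h0 _).le) S hfs g hgsum
    intro a2
    set s' := {n : ℕ | (n, a2) ∈ S} with hs'
    have hfac : ∀ a1 : s', F (a1, a2) = τ ^ (w2 * (a2:ℝ)) * τ ^ (w1 * ((a1:ℕ):ℝ)) := by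
      intro a1; rw [hF]; dsimp only; rw [← Real.rpow_add h0]; ring_nf
    rw [tsum_congr hfac, tsum_mul_left]
    by_cases hne : s'.Nonempty
    · obtain ⟨n0, hn0⟩ := hne
      have hx0 : 0 ≤ (L - δ2 * a2) / δ1 := by
        have h := hS (n0, a2) hn0
        have : (0:ℝ) ≤ δ1 * n0 := by positivity
        apply div_nonneg _ hδ1.le
        dsimp at h; linarith
      have hbd : ∀ n ∈ s', (n : ℝ) ≤ (L - δ2 * a2) / δ1 := by
        intro n hn
        have h := hS (n, a2) hn
        rw [le_div_iff₀ hδ1]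
        dsimp at h; linarith
      have := geo_init hτ hw1 ((L - δ2 * a2) / δ1) hx0 s' hbd
      rw [hg]
      exact mul_le_mul_of_nonneg_left this (Real.rpow_pos_of_pos h0 _).le
    · rw [Set.not_nonempty_iff_eq_empty] at hne
      have : ∑' n : s', τ ^ (w1 * ((n:ℕ):ℝ)) = 0 := by
        rw [hne]; exact tsum_empty
      rw [this, mul_zero, hg]
      positivity
  refine hmain.trans ?_
  rw [hgform, tsum_mul_left, geo_tsum hτ hr2]
  exact le_of_eq (by ring)

/-- Case s = 1+γ : linear growth bound. -/
lemma sum_bound_zero {τ w2 δ1 δ2 : ℝ} (hτ : 1 < τ) (hw2 : w2 < 0)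
    (hδ1 : 0 < δ1) (hδ2 : 0 < δ2) :
    ∃ C : ℝ, 0 < C ∧ ∀ L : ℝ, 0 ≤ L → ∀ S : Set (ℕ × ℕ),
      (∀ p ∈ S, δ1 * p.1 + δ2 * p.2 ≤ L) →
      ∑' p : S, τ ^ (w2 * ((p : ℕ × ℕ).2 : ℝ)) ≤ C * (L + 1) := by
  have h0 : (0:ℝ) < τ := lt_trans one_pos hτ
  refine ⟨(1 - τ ^ w2)⁻¹ * (1 / δ1 + 1), mul_pos (geo_inv_pos hτ hw2) (by positivity), ?_⟩
  intro L hL S hS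
  set F := fun p : ℕ × ℕ => τ ^ (w2 * (p.2 : ℝ)) with hF
  have hSfin : S.Finite := set_finite hδ1 hδ2 S hS
  have hfs : Summable (S.indicator F) :=
    summable_of_finite_support (hSfin.subset Set.support_indicator_subset)
  set g := fun a2 : ℕ => τ ^ (w2 * (a2 : ℝ)) * (L / δ1 + 1) with hg
  have hgsum : Summable g := (geo_summable hτ hw2).mul_right _
  have hmain : ∑' p : S, F p ≤ ∑' a2, g a2 := by
    apply tsum_set_le_fubini (fun p => (Real.rpow_pos_of_pos h0 _).le) S hfs g hgsum
    intro a2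
    set s' := {n : ℕ | (n, a2) ∈ S} with hs'
    have hbd : ∀ n ∈ s', (n : ℝ) ≤ L / δ1 := by
      intro n hn
      have h := hS (n, a2) hn
      rw [le_div_iff₀ hδ1]
      have : (0:ℝ) ≤ δ2 * a2 := by positivity
      dsimp at h; linarith
    have hLd : 0 ≤ L / δ1 := by positivity
    calc ∑' a1 : s', F (a1, a2)
        = ∑' _a1 : s', τ ^ (w2 * (a2:ℝ)) := tsum_congr (fun _ => rfl)
      _ ≤ τ ^ (w2 * (a2:ℝ)) * (L / δ1 + 1) :=
          count_bound (Real.rpow_pos_of_pos h0 _).le hLd s' hbd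
      _ = g a2 := rfl
  refine hmain.trans ?_
  rw [hg, tsum_mul_right, geo_tsum hτ hw2]
  have hL1 : L / δ1 + 1 ≤ (1 / δ1 + 1) * (L + 1) := by
    have h1 : 0 < 1/δ1 := by positivity
    have h2 : L / δ1 = 1/δ1 * L := by ring
    nlinarith
  calc (1 - τ ^ w2)⁻¹ * (L / δ1 + 1)
      ≤ (1 - τ ^ w2)⁻¹ * ((1 / δ1 + 1) * (L + 1)) :=
        mul_le_mul_of_nonneg_left hL1 (geo_inv_pos hτ hw2).le
    _ = (1 - τ ^ w2)⁻¹ * (1 / δ1 + 1) * (L + 1) := by ring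

/-- Tail bound for the bias sum. -/
lemma tail_bound {τ b δ1 δ2 : ℝ} (hτ : 1 < τ) (hb : 0 < b) (hδ2 : 0 < δ2)
    (hδ21 : δ2 < δ1) (hδhalf : 1/2 < δ1) :
    ∃ C : ℝ, 0 < C ∧ ∀ M' : ℝ, ∀ S : Set (ℕ × ℕ),
      (∀ p ∈ S, M' < δ1 * p.1 + δ2 * p.2 ∨ M' < ((p.1 : ℝ) + (p.2 : ℝ)) / 2) →
      ∑' p : S, τ ^ (-(b * (((p : ℕ × ℕ).1 : ℝ) + ((p : ℕ × ℕ).2 : ℝ))))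
        ≤ C * τ ^ (-(b / δ1) * M') := by
  have h0 : (0:ℝ) < τ := lt_trans one_pos hτ
  have hδ1 : 0 < δ1 := lt_trans hδ2 hδ21
  have hbneg : -b < 0 := by linarith
  have hr2 : b * δ2 / δ1 - b < 0 := by
    rw [sub_neg, div_lt_iff₀ hδ1]
    nlinarith
  have hc2 : b / (2 * δ1) - b < 0 := by
    rw [sub_neg, div_lt_iff₀ (by linarith : (0:ℝ) < 2 * δ1)]
    nlinarith
  set CA := (1 - τ ^ (-b))⁻¹ * (1 - τ ^ (b * δ2 / δ1 - b))⁻¹ with hCA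
  set CB := (1 - τ ^ (b / (2 * δ1) - b))⁻¹ * (1 - τ ^ (b / (2 * δ1) - b))⁻¹ with hCB
  have hCApos : 0 < CA := mul_pos (geo_inv_pos hτ hbneg) (geo_inv_pos hτ hr2)
  have hCBpos : 0 < CB := mul_pos (geo_inv_pos hτ hc2) (geo_inv_pos hτ hc2)
  refine ⟨CA + CB, by linarith, ?_⟩
  intro M' S hS
  set f := fun p : ℕ × ℕ => τ ^ (-(b * ((p.1 : ℝ) + (p.2 : ℝ)))) with hf
  have hfpos : ∀ p, 0 < f p := fun p => Real.rpow_pos_of_pos h0 _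
  have hfprod : ∀ p : ℕ × ℕ, f p = τ ^ ((-b) * (p.1:ℝ) + (-b) * (p.2:ℝ)) := by
    intro p; rw [hf]; ring_nf
  have hfsum : Summable f := by
    have he : f = fun p : ℕ × ℕ => τ ^ ((-b) * (p.1:ℝ) + (-b) * (p.2:ℝ)) := funext hfprod
    rw [he]; exact prod_summable hτ hbneg hbneg
  set A := {p : ℕ × ℕ | M' < δ1 * p.1 + δ2 * p.2} with hA
  set B := {p : ℕ × ℕ | M' < ((p.1 : ℝ) + (p.2 : ℝ)) / 2} with hB
  -- split
  have hsplit : ∑' p : S, f p ≤ (∑' p : A, f p) + (∑' p : B, f p) := by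
    rw [tsum_subtype S f, tsum_subtype A f, tsum_subtype B f]
    rw [← Summable.tsum_add (hfsum.indicator A) (hfsum.indicator B)]
    apply Summable.tsum_le_tsum _ (hfsum.indicator S) ((hfsum.indicator A).add (hfsum.indicator B))
    intro p
    by_cases hp : p ∈ S
    · rw [Set.indicator_of_mem hp]
      rcases hS p hp with h | h
      · have : p ∈ A := h
        rw [Set.indicator_of_mem this]
        have := Set.indicator_nonneg (fun q _ => (hfpos q).le) (s := B) p
        linarith
      · have : p ∈ B := h
        rw [Set.indicator_of_mem this]
        have := Set.indicator_nonneg (fun q _ => (hfpos q).le) (s := A) p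
        linarith
    · rw [Set.indicator_of_notMem hp]
      have h1 := Set.indicator_nonneg (fun q _ => (hfpos q).le) (s := A) p
      have h2 := Set.indicator_nonneg (fun q _ => (hfpos q).le) (s := B) p
      linarith
  -- bound on A via Fubini
  have hAbound : ∑' p : A, f p ≤ CA * τ ^ (-(b / δ1) * M') := by
    set g := fun a2 : ℕ => τ ^ ((-b) * (a2:ℝ)) *
        (τ ^ ((-b) * ((M' - δ2 * a2) / δ1)) * (1 - τ ^ (-b))⁻¹) with hg
    have hgform : g = fun a2 : ℕ =>
        ((1 - τ ^ (-b))⁻¹ * τ ^ (-(b / δ1) * M')) * τ ^ ((b * δ2 / δ1 - b) * a2) := by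
      funext a2
      rw [hg]
      have he : (-b) * (a2:ℝ) + (-b) * ((M' - δ2 * a2) / δ1)
          = -(b / δ1) * M' + (b * δ2 / δ1 - b) * a2 := by
        field_simp; ring
      calc τ ^ ((-b) * (a2:ℝ)) * (τ ^ ((-b) * ((M' - δ2 * a2) / δ1)) * (1 - τ ^ (-b))⁻¹)
          = τ ^ ((-b) * (a2:ℝ) + (-b) * ((M' - δ2 * a2) / δ1)) * (1 - τ ^ (-b))⁻¹ := by
            rw [Real.rpow_add h0]; ring
        _ = τ ^ (-(b / δ1) * M' + (b * δ2 / δ1 - b) * a2) * (1 - τ ^ (-b))⁻¹ := by rw [he]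
        _ = ((1 - τ ^ (-b))⁻¹ * τ ^ (-(b / δ1) * M')) * τ ^ ((b * δ2 / δ1 - b) * a2) := by
            rw [Real.rpow_add h0]; ring
    have hgsum : Summable g := by
      rw [hgform]; exact (geo_summable hτ hr2).mul_left _
    have hmain : ∑' p : A, f p ≤ ∑' a2, g a2 := by
      apply tsum_set_le_fubini (fun p => (hfpos p).le) A (hfsum.indicator A) g hgsum
      intro a2
      set s' := {n : ℕ | (n, a2) ∈ A} with hs'
      have hfac : ∀ a1 : s', f (a1, a2) = τ ^ ((-b) * (a2:ℝ)) * τ ^ ((-b) * ((a1:ℕ):ℝ)) := by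
        intro a1; rw [hf]; dsimp only; rw [← Real.rpow_add h0]; ring_nf
      rw [tsum_congr hfac, tsum_mul_left]
      have hbd : ∀ n ∈ s', (M' - δ2 * a2) / δ1 ≤ (n : ℝ) := by
        intro n hn
        have h : M' < δ1 * n + δ2 * a2 := hn
        rw [div_le_iff₀ hδ1]
        nlinarith
      have := geo_tail hτ hbneg ((M' - δ2 * a2) / δ1) s' hbd
      rw [hg]
      exact mul_le_mul_of_nonneg_left this (Real.rpow_pos_of_pos h0 _).le
    refine hmain.trans ?_
    rw [hgform, tsum_mul_left, geo_tsum hτ hr2, hCA]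
    exact le_of_eq (by ring)
  -- bound on B pointwise
  have hBbound : ∑' p : B, f p ≤ CB * τ ^ (-(b / δ1) * M') := by
    set h := fun p : ℕ × ℕ => τ ^ (-(b / δ1) * M') *
        (τ ^ ((b / (2 * δ1) - b) * (p.1:ℝ)) * τ ^ ((b / (2 * δ1) - b) * (p.2:ℝ))) with hh
    have hhsum : Summable h := by
      have he : h = fun p : ℕ × ℕ => τ ^ (-(b / δ1) * M') *
          τ ^ ((b / (2 * δ1) - b) * (p.1:ℝ) + (b / (2 * δ1) - b) * (p.2:ℝ)) := by
        funext p; rw [hh, Real.rpow_add h0]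
      rw [he]; exact (prod_summable hτ hc2 hc2).mul_left _
    have hle : ∀ p : ℕ × ℕ, B.indicator f p ≤ h p := by
      intro p
      by_cases hp : p ∈ B
      · rw [Set.indicator_of_mem hp]
        have hpB : M' < ((p.1 : ℝ) + (p.2 : ℝ)) / 2 := hp
        show τ ^ (-(b * ((p.1:ℝ) + (p.2:ℝ)))) ≤ τ ^ (-(b / δ1) * M') *
          (τ ^ ((b / (2 * δ1) - b) * (p.1:ℝ)) * τ ^ ((b / (2 * δ1) - b) * (p.2:ℝ)))
        have hsplit2 : -(b * ((p.1:ℝ) + (p.2:ℝ)))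
            = (-(b / (2 * δ1)) * ((p.1:ℝ) + (p.2:ℝ)))
              + ((b / (2 * δ1) - b) * (p.1:ℝ) + (b / (2 * δ1) - b) * (p.2:ℝ)) := by
          field_simp; ring
        rw [hsplit2, Real.rpow_add h0, Real.rpow_add h0, ← mul_assoc]
        have hmono : τ ^ (-(b / (2 * δ1)) * ((p.1:ℝ) + (p.2:ℝ))) ≤ τ ^ (-(b / δ1) * M') := by
          rw [Real.rpow_le_rpow_left_iff hτ]
          have hcoef : 0 < b / (2 * δ1) := by positivity
          have : 2 * M' < (p.1:ℝ) + (p.2:ℝ) := by linarith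
          have hq : -(b / (2*δ1)) * ((p.1:ℝ) + (p.2:ℝ)) ≤ -(b / (2*δ1)) * (2 * M') := by
            nlinarith
          calc -(b / (2*δ1)) * ((p.1:ℝ) + (p.2:ℝ)) ≤ -(b / (2*δ1)) * (2 * M') := hq
            _ = -(b / δ1) * M' := by field_simp
        have h1 : (0:ℝ) < τ ^ ((b / (2 * δ1) - b) * (p.1:ℝ)) := Real.rpow_pos_of_pos h0 _
        have h2 : (0:ℝ) < τ ^ ((b / (2 * δ1) - b) * (p.2:ℝ)) := Real.rpow_pos_of_pos h0 _
        calc τ ^ (-(b / (2 * δ1)) * ((p.1:ℝ) + (p.2:ℝ))) * τ ^ ((b / (2 * δ1) - b) * (p.1:ℝ))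
              * τ ^ ((b / (2 * δ1) - b) * (p.2:ℝ))
            ≤ τ ^ (-(b / δ1) * M') * τ ^ ((b / (2 * δ1) - b) * (p.1:ℝ))
              * τ ^ ((b / (2 * δ1) - b) * (p.2:ℝ)) := by
              apply mul_le_mul_of_nonneg_right _ h2.le
              exact mul_le_mul_of_nonneg_right hmono h1.le
          _ = τ ^ (-(b / δ1) * M') *
              (τ ^ ((b / (2 * δ1) - b) * (p.1:ℝ)) * τ ^ ((b / (2 * δ1) - b) * (p.2:ℝ))) := by
              ring
      · rw [Set.indicator_of_notMem hp]
        have : 0 < h p := by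
          rw [hh]; positivity
        linarith
    calc ∑' p : B, f p = ∑' p, B.indicator f p := tsum_subtype B f
      _ ≤ ∑' p, h p := Summable.tsum_le_tsum hle (hfsum.indicator B) hhsum
      _ = CB * τ ^ (-(b / δ1) * M') := by
          have he : h = fun p : ℕ × ℕ => τ ^ (-(b / δ1) * M') *
              τ ^ ((b / (2 * δ1) - b) * (p.1:ℝ) + (b / (2 * δ1) - b) * (p.2:ℝ)) := by
            funext p; rw [hh, Real.rpow_add h0]
          rw [he, tsum_mul_left, prod_tsum hτ hc2 hc2, hCB]
          ring
  calc ∑' p : S, f p ≤ (∑' p : A, f p) + (∑' p : B, f p) := hsplit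
    _ ≤ CA * τ ^ (-(b / δ1) * M') + CB * τ ^ (-(b / δ1) * M') := add_le_add hAbound hBbound
    _ = (CA + CB) * τ ^ (-(b / δ1) * M') := by ring

end Stmt12


set_option maxHeartbeats 1000000 in
/-- Isotropic complexity of the multi-index DLMC work bound: with rates
`γ₁=γ₂=γ`, `w₁=w₂=s₁=s₂=s`, `b₁=b₂=b`, `2b ≥ s`, the work bound
`W(TOL) = TOL⁻² (∑_{α∈I(L(TOL))} τ^{α₁(1+γ-s)/2+α₂(γ-s)/2} + τ^{(α₁+α₂)(γ-s)/2})²`,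
with `L(TOL)` minimal such that the geometric bias bound is below `TOL`,
is `O(TOL⁻²)` if `s > 1+γ`, `O(TOL⁻²(log TOL⁻¹)²)` if `s = 1+γ`, and
`O(TOL^{-2-(1+γ-s)/b})` if `s < 1+γ`, as `TOL → 0⁺`. -/
theorem stmt12 (τ γ s b QB : ℝ)
    (hτ : 1 < τ) (hγ : 0 < γ) (hs : 0 < s) (hb : 0 < b)
    (hbs : s ≤ 2 * b) (hQB : 0 < QB)
    (δ1 δ2 δδ1 δδ2 : ℝ)
    (hδ1 : δ1 = ((1 + γ - s) / 2 + b) / (((1 + γ - s) / 2 + b) + ((γ - s) / 2 + b)))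
    (hδ2 : δ2 = ((γ - s) / 2 + b) / (((1 + γ - s) / 2 + b) + ((γ - s) / 2 + b)))
    (hδδ1 : δδ1 = 1 / 2) (hδδ2 : δδ2 = 1 / 2)
    (Iset : ℝ → Set (ℕ × ℕ))
    (hIset : ∀ L, Iset L = {α : ℕ × ℕ |
      Real.exp (δ1 * α.1 + δ2 * α.2) + Real.exp (δδ1 * α.1 + δδ2 * α.2) ≤ Real.exp L})
    (bias : ℝ → ℝ)
    (hbias : ∀ L, bias L = QB *
      ∑' α : ((Iset L)ᶜ : Set (ℕ × ℕ)), τ ^ (-(b * (((α : ℕ × ℕ).1 : ℝ) + ((α : ℕ × ℕ).2 : ℝ)))))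
    (Lfun : ℝ → ℝ)
    (hLfun : ∀ TOL : ℝ, 0 < TOL → bias (Lfun TOL) ≤ TOL ∧
      ∀ L' : ℝ, bias L' ≤ TOL → Lfun TOL ≤ L')
    (W : ℝ → ℝ)
    (hW : ∀ TOL : ℝ, 0 < TOL → W TOL = TOL ^ (-2 : ℝ) *
      (∑' α : Iset (Lfun TOL),
        (τ ^ ((((α : ℕ × ℕ).1 : ℝ) * (1 + γ - s) / 2 + ((α : ℕ × ℕ).2 : ℝ) * (γ - s) / 2)) +
         τ ^ ((((α : ℕ × ℕ).1 : ℝ) * (γ - s) / 2 + ((α : ℕ × ℕ).2 : ℝ) * (γ - s) / 2)))) ^ 2) :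
    (1 + γ < s → ∃ C > 0, ∀ᶠ TOL in 𝓝[>] (0 : ℝ),
      W TOL ≤ C * TOL ^ (-2 : ℝ)) ∧
    (s = 1 + γ → ∃ C > 0, ∀ᶠ TOL in 𝓝[>] (0 : ℝ),
      W TOL ≤ C * TOL ^ (-2 : ℝ) * (Real.log TOL⁻¹) ^ 2) ∧
    (s < 1 + γ → ∃ C > 0, ∀ᶠ TOL in 𝓝[>] (0 : ℝ),
      W TOL ≤ C * TOL ^ (-(2 + (1 + γ - s) / b))) := by
  have h0 : (0:ℝ) < τ := lt_trans one_pos hτ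
  have hlτ : 0 < Real.log τ := Real.log_pos hτ
  have hlog2pos : 0 < Real.log 2 := Real.log_pos (by norm_num)
  have hw2b : 0 < (γ - s) / 2 + b := by linarith
  have hw1b : 0 < (1 + γ - s) / 2 + b := by linarith
  have hD : 0 < ((1 + γ - s) / 2 + b) + ((γ - s) / 2 + b) := by linarith
  have hδ1pos : 0 < δ1 := by rw [hδ1]; positivity
  have hδ2pos : 0 < δ2 := by rw [hδ2]; positivity
  have hδ21 : δ2 < δ1 := by
    rw [hδ1, hδ2, div_lt_div_iff₀ hD hD]; nlinarith
  have hδhalf : 1 / 2 < δ1 := by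
    rw [hδ1, lt_div_iff₀ hD]; linarith
  -- membership facts
  have hmem : ∀ L : ℝ, ∀ p ∈ Iset L, δ1 * (p.1:ℝ) + δ2 * (p.2:ℝ) ≤ L := by
    intro L p hp
    rw [hIset] at hp
    simp only [Set.mem_setOf_eq] at hp
    have h2 := Real.exp_pos (δδ1 * p.1 + δδ2 * p.2)
    have h1 : Real.exp (δ1 * p.1 + δ2 * p.2) ≤ Real.exp L := by linarith
    exact Real.exp_le_exp.mp h1
  have hlogL : ∀ L : ℝ, (Iset L).Nonempty → 0 ≤ L := by
    intro L hLn
    obtain ⟨p, hp⟩ := hLn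
    rw [hIset] at hp
    simp only [Set.mem_setOf_eq] at hp
    have h1 : Real.exp 0 ≤ Real.exp (δ1 * p.1 + δ2 * p.2) := by
      apply Real.exp_le_exp.mpr; positivity
    have h2 := Real.exp_pos (δδ1 * p.1 + δδ2 * p.2)
    have h3 : Real.exp 0 ≤ Real.exp L := by linarith
    exact Real.exp_le_exp.mp h3
  have hcompl : ∀ L : ℝ, ∀ p ∈ (Iset L)ᶜ,
      L - Real.log 2 < δ1 * (p.1:ℝ) + δ2 * (p.2:ℝ) ∨
      L - Real.log 2 < ((p.1:ℝ) + (p.2:ℝ)) / 2 := by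
    intro L p hp
    rw [hIset] at hp
    simp only [Set.mem_compl_iff, Set.mem_setOf_eq, not_le] at hp
    have hexp2 : Real.exp (L - Real.log 2) = Real.exp L / 2 := by
      rw [Real.exp_sub, Real.exp_log (by norm_num : (0:ℝ) < 2)]
    rcases le_total (Real.exp (δ1 * p.1 + δ2 * p.2)) (Real.exp (δδ1 * p.1 + δδ2 * p.2)) with h | h
    · right
      have h4 : Real.exp (L - Real.log 2) < Real.exp (δδ1 * p.1 + δδ2 * p.2) := by
        rw [hexp2]; linarith
      have h5 := Real.exp_lt_exp.mp h4
      rw [hδδ1, hδδ2] at h5; linarith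
    · left
      have h4 : Real.exp (L - Real.log 2) < Real.exp (δ1 * p.1 + δ2 * p.2) := by
        rw [hexp2]; linarith
      exact Real.exp_lt_exp.mp h4
  -- tail / bias bounds
  obtain ⟨CT, hCTpos, hCT⟩ := Stmt12.tail_bound hτ hb hδ2pos hδ21 hδhalf
  have hbias_ub : ∀ M : ℝ, bias M ≤ (QB * CT) * τ ^ (-(b / δ1) * (M - Real.log 2)) := by
    intro M
    rw [hbias M]
    have h1 := hCT (M - Real.log 2) ((Iset M)ᶜ) (hcompl M)
    calc QB * ∑' α : ((Iset M)ᶜ : Set (ℕ × ℕ)),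
          τ ^ (-(b * (((α : ℕ × ℕ).1 : ℝ) + ((α : ℕ × ℕ).2 : ℝ))))
        ≤ QB * (CT * τ ^ (-(b / δ1) * (M - Real.log 2))) :=
          mul_le_mul_of_nonneg_left h1 hQB.le
      _ = (QB * CT) * τ ^ (-(b / δ1) * (M - Real.log 2)) := by ring
  have hkey : ∀ TOL : ℝ, 0 < TOL →
      TOL < (QB * CT) * τ ^ (-(b / δ1) * ((Lfun TOL - 1) - Real.log 2)) := by
    intro TOL hT
    by_contra hcon
    push_neg at hcon
    have h2 := (hLfun TOL hT).2 (Lfun TOL - 1) ((hbias_ub (Lfun TOL - 1)).trans hcon)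
    linarith
  -- summability over the (finite) index sets
  have hfinSet : ∀ L : ℝ, (Iset L).Finite :=
    fun L => Stmt12.set_finite hδ1pos hδ2pos (Iset L) (hmem L)
  -- nonnegativity of the work sum
  have hSnn : ∀ L : ℝ, (0:ℝ) ≤ ∑' α : Iset L,
      (τ ^ ((((α : ℕ × ℕ).1 : ℝ) * (1 + γ - s) / 2 + ((α : ℕ × ℕ).2 : ℝ) * (γ - s) / 2)) +
       τ ^ ((((α : ℕ × ℕ).1 : ℝ) * (γ - s) / 2 + ((α : ℕ × ℕ).2 : ℝ) * (γ - s) / 2))) := by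
    intro L
    apply tsum_nonneg
    intro α
    have := (Real.rpow_pos_of_pos h0 ((((α : ℕ × ℕ).1 : ℝ) * (1 + γ - s) / 2 +
      ((α : ℕ × ℕ).2 : ℝ) * (γ - s) / 2))).le
    have := (Real.rpow_pos_of_pos h0 ((((α : ℕ × ℕ).1 : ℝ) * (γ - s) / 2 +
      ((α : ℕ × ℕ).2 : ℝ) * (γ - s) / 2))).le
    linarith
  refine ⟨?_, ?_, ?_⟩
  -- CASE 1 : s > 1 + γ
  · intro hcase
    have hu : (1 + γ - s) / 2 < 0 := by linarith
    have hv : (γ - s) / 2 < 0 := by linarith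
    set K := (1 - τ ^ ((1 + γ - s) / 2))⁻¹ * (1 - τ ^ ((γ - s) / 2))⁻¹ with hK
    have hKpos : 0 < K := mul_pos (Stmt12.geo_inv_pos hτ hu) (Stmt12.geo_inv_pos hτ hv)
    refine ⟨4 * K ^ 2, by positivity, ?_⟩
    filter_upwards [self_mem_nhdsWithin] with TOL hT
    replace hT : 0 < TOL := hT
    set L := Lfun TOL with hLdef
    haveI := (hfinSet L).to_subtype
    have hpw : ∀ α : (Iset L),
        τ ^ ((((α : ℕ × ℕ).1 : ℝ) * (1 + γ - s) / 2 + ((α : ℕ × ℕ).2 : ℝ) * (γ - s) / 2)) +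
        τ ^ ((((α : ℕ × ℕ).1 : ℝ) * (γ - s) / 2 + ((α : ℕ × ℕ).2 : ℝ) * (γ - s) / 2))
        ≤ 2 * τ ^ ((1 + γ - s) / 2 * ((α : ℕ × ℕ).1 : ℝ) + (γ - s) / 2 * ((α : ℕ × ℕ).2 : ℝ)) := by
      intro α
      have he1 : (((α : ℕ × ℕ).1 : ℝ) * (1 + γ - s) / 2 + ((α : ℕ × ℕ).2 : ℝ) * (γ - s) / 2)
          = (1 + γ - s) / 2 * ((α : ℕ × ℕ).1 : ℝ) + (γ - s) / 2 * ((α : ℕ × ℕ).2 : ℝ) := by ring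
      have hcast : (0:ℝ) ≤ ((α : ℕ × ℕ).1 : ℝ) := Nat.cast_nonneg _
      have he2 : (((α : ℕ × ℕ).1 : ℝ) * (γ - s) / 2 + ((α : ℕ × ℕ).2 : ℝ) * (γ - s) / 2)
          ≤ (1 + γ - s) / 2 * ((α : ℕ × ℕ).1 : ℝ) + (γ - s) / 2 * ((α : ℕ × ℕ).2 : ℝ) := by
        nlinarith
      rw [he1]
      have hb2 : τ ^ ((((α : ℕ × ℕ).1 : ℝ) * (γ - s) / 2 + ((α : ℕ × ℕ).2 : ℝ) * (γ - s) / 2))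
          ≤ τ ^ ((1 + γ - s) / 2 * ((α : ℕ × ℕ).1 : ℝ) + (γ - s) / 2 * ((α : ℕ × ℕ).2 : ℝ)) :=
        (Real.rpow_le_rpow_left_iff hτ).mpr he2
      linarith
    have hSle : (∑' α : Iset L,
        (τ ^ ((((α : ℕ × ℕ).1 : ℝ) * (1 + γ - s) / 2 + ((α : ℕ × ℕ).2 : ℝ) * (γ - s) / 2)) +
         τ ^ ((((α : ℕ × ℕ).1 : ℝ) * (γ - s) / 2 + ((α : ℕ × ℕ).2 : ℝ) * (γ - s) / 2))))
        ≤ 2 * K := by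
      calc (∑' α : Iset L,
          (τ ^ ((((α : ℕ × ℕ).1 : ℝ) * (1 + γ - s) / 2 + ((α : ℕ × ℕ).2 : ℝ) * (γ - s) / 2)) +
           τ ^ ((((α : ℕ × ℕ).1 : ℝ) * (γ - s) / 2 + ((α : ℕ × ℕ).2 : ℝ) * (γ - s) / 2))))
          ≤ ∑' α : Iset L, 2 * τ ^ ((1 + γ - s) / 2 * ((α : ℕ × ℕ).1 : ℝ) +
              (γ - s) / 2 * ((α : ℕ × ℕ).2 : ℝ)) :=
            Summable.tsum_le_tsum hpw Summable.of_finite Summable.of_finite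
        _ = 2 * ∑' α : Iset L, τ ^ ((1 + γ - s) / 2 * ((α : ℕ × ℕ).1 : ℝ) +
              (γ - s) / 2 * ((α : ℕ × ℕ).2 : ℝ)) := tsum_mul_left
        _ ≤ 2 * K := by
            have := Stmt12.sum_bound_neg hτ hu hv (Iset L)
            rw [hK]; linarith
    rw [hW TOL hT]
    have hsq : (∑' α : Iset L,
        (τ ^ ((((α : ℕ × ℕ).1 : ℝ) * (1 + γ - s) / 2 + ((α : ℕ × ℕ).2 : ℝ) * (γ - s) / 2)) +
         τ ^ ((((α : ℕ × ℕ).1 : ℝ) * (γ - s) / 2 + ((α : ℕ × ℕ).2 : ℝ) * (γ - s) / 2)))) ^ 2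
        ≤ (2 * K) ^ 2 := pow_le_pow_left₀ (hSnn L) hSle 2
    calc TOL ^ (-2:ℝ) * (∑' α : Iset L,
          (τ ^ ((((α : ℕ × ℕ).1 : ℝ) * (1 + γ - s) / 2 + ((α : ℕ × ℕ).2 : ℝ) * (γ - s) / 2)) +
           τ ^ ((((α : ℕ × ℕ).1 : ℝ) * (γ - s) / 2 + ((α : ℕ × ℕ).2 : ℝ) * (γ - s) / 2)))) ^ 2
        ≤ TOL ^ (-2:ℝ) * (2 * K) ^ 2 :=
          mul_le_mul_of_nonneg_left hsq (Real.rpow_nonneg hT.le _)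
      _ = 4 * K ^ 2 * TOL ^ (-2:ℝ) := by ring
  -- CASE 2 : s = 1 + γ
  · intro hcase
    have hv : (γ - s) / 2 < 0 := by linarith
    have hzero : 1 + γ - s = 0 := by linarith
    obtain ⟨C2, hC2pos, hC2⟩ := Stmt12.sum_bound_zero (w2 := (γ - s)/2) hτ hv hδ1pos hδ2pos
    -- constant for the level bound
    set c := δ1 / (b * Real.log τ) with hc
    have hcpos : 0 < c := by rw [hc]; positivity
    set K0 := 2 + Real.log 2 + c * (|Real.log (QB * CT)| + 1) with hK0
    have hK0pos : 0 < K0 := by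
      have := abs_nonneg (Real.log (QB * CT))
      rw [hK0]; positivity
    refine ⟨4 * C2 ^ 2 * K0 ^ 2, by positivity, ?_⟩
    have hmemIoo : Set.Ioo (0:ℝ) (Real.exp (-1)) ∈ 𝓝[>] (0:ℝ) :=
      Ioo_mem_nhdsGT_of_mem ⟨le_refl 0, Real.exp_pos _⟩
    filter_upwards [hmemIoo] with TOL hTm
    obtain ⟨hT, hTsmall⟩ := hTm
    set L := Lfun TOL with hLdef
    set X := Real.log TOL⁻¹ with hX
    have hX1 : 1 ≤ X := by
      rw [hX, Real.log_inv]
      have h1 : Real.log TOL < Real.log (Real.exp (-1)) := Real.log_lt_log hT hTsmall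
      rw [Real.log_exp] at h1
      linarith
    have hXpos : 0 < X := lt_of_lt_of_le one_pos hX1
    rw [hW TOL hT]
    by_cases hne : (Iset L).Nonempty
    · have hL0 : 0 ≤ L := hlogL L hne
      -- level bound
      have hlogkey : Real.log TOL < Real.log (QB * CT) +
          (-(b / δ1) * ((L - 1) - Real.log 2)) * Real.log τ := by
        have h1 := Real.log_lt_log hT (hkey TOL hT)
        rw [Real.log_mul (by positivity) (ne_of_gt (Real.rpow_pos_of_pos h0 _)),
          Real.log_rpow h0] at h1
        exact h1
      have hLb : L + 1 ≤ K0 * X := by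
        have hfact : L - 1 - Real.log 2
            = c * ((b / δ1) * Real.log τ * (L - 1 - Real.log 2)) := by
          rw [hc]; field_simp
        have h2 : (b / δ1) * Real.log τ * (L - 1 - Real.log 2)
            < Real.log (QB * CT) + X := by
          have h2' : -(b / δ1) * (L - 1 - Real.log 2) * Real.log τ
              = -((b / δ1) * Real.log τ * (L - 1 - Real.log 2)) := by ring
          rw [h2'] at hlogkey
          rw [hX, Real.log_inv]
          linarith
        have h3 : L - 1 - Real.log 2 < c * (Real.log (QB * CT) + X) := by
          rw [hfact]
          exact mul_lt_mul_of_pos_left h2 hcpos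
        have h5 : c * |Real.log (QB * CT)| ≤ c * |Real.log (QB * CT)| * X :=
          le_mul_of_one_le_right (by positivity) hX1
        have h6 : c * Real.log (QB * CT) ≤ c * |Real.log (QB * CT)| :=
          mul_le_mul_of_nonneg_left (le_abs_self _) hcpos.le
        have h7 : (2 + Real.log 2) ≤ (2 + Real.log 2) * X :=
          le_mul_of_one_le_right (by positivity) hX1
        rw [hK0]
        nlinarith
      -- sum bound
      have hpw : ∀ α : (Iset L),
          τ ^ ((((α : ℕ × ℕ).1 : ℝ) * (1 + γ - s) / 2 + ((α : ℕ × ℕ).2 : ℝ) * (γ - s) / 2)) +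
          τ ^ ((((α : ℕ × ℕ).1 : ℝ) * (γ - s) / 2 + ((α : ℕ × ℕ).2 : ℝ) * (γ - s) / 2))
          ≤ 2 * τ ^ ((γ - s) / 2 * ((α : ℕ × ℕ).2 : ℝ)) := by
        intro α
        have he1 : (((α : ℕ × ℕ).1 : ℝ) * (1 + γ - s) / 2 + ((α : ℕ × ℕ).2 : ℝ) * (γ - s) / 2)
            = (γ - s) / 2 * ((α : ℕ × ℕ).2 : ℝ) := by rw [hzero]; ring
        have hcast : (0:ℝ) ≤ ((α : ℕ × ℕ).1 : ℝ) := Nat.cast_nonneg _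
        have he2 : (((α : ℕ × ℕ).1 : ℝ) * (γ - s) / 2 + ((α : ℕ × ℕ).2 : ℝ) * (γ - s) / 2)
            ≤ (γ - s) / 2 * ((α : ℕ × ℕ).2 : ℝ) := by nlinarith
        rw [he1]
        have hb2 : τ ^ ((((α : ℕ × ℕ).1 : ℝ) * (γ - s) / 2 + ((α : ℕ × ℕ).2 : ℝ) * (γ - s) / 2))
            ≤ τ ^ ((γ - s) / 2 * ((α : ℕ × ℕ).2 : ℝ)) :=
          (Real.rpow_le_rpow_left_iff hτ).mpr he2
        linarith
      haveI := (hfinSet L).to_subtype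
      have hSle : (∑' α : Iset L,
          (τ ^ ((((α : ℕ × ℕ).1 : ℝ) * (1 + γ - s) / 2 + ((α : ℕ × ℕ).2 : ℝ) * (γ - s) / 2)) +
           τ ^ ((((α : ℕ × ℕ).1 : ℝ) * (γ - s) / 2 + ((α : ℕ × ℕ).2 : ℝ) * (γ - s) / 2))))
          ≤ 2 * (C2 * (L + 1)) := by
        calc (∑' α : Iset L,
            (τ ^ ((((α : ℕ × ℕ).1 : ℝ) * (1 + γ - s) / 2 + ((α : ℕ × ℕ).2 : ℝ) * (γ - s) / 2)) +
             τ ^ ((((α : ℕ × ℕ).1 : ℝ) * (γ - s) / 2 + ((α : ℕ × ℕ).2 : ℝ) * (γ - s) / 2))))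
            ≤ ∑' α : Iset L, 2 * τ ^ ((γ - s) / 2 * ((α : ℕ × ℕ).2 : ℝ)) :=
              Summable.tsum_le_tsum hpw Summable.of_finite Summable.of_finite
          _ = 2 * ∑' α : Iset L, τ ^ ((γ - s) / 2 * ((α : ℕ × ℕ).2 : ℝ)) := tsum_mul_left
          _ ≤ 2 * (C2 * (L + 1)) := by
              have := hC2 L hL0 (Iset L) (hmem L)
              linarith
      have hSle2 : (∑' α : Iset L,
          (τ ^ ((((α : ℕ × ℕ).1 : ℝ) * (1 + γ - s) / 2 + ((α : ℕ × ℕ).2 : ℝ) * (γ - s) / 2)) +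
           τ ^ ((((α : ℕ × ℕ).1 : ℝ) * (γ - s) / 2 + ((α : ℕ × ℕ).2 : ℝ) * (γ - s) / 2))))
          ≤ 2 * C2 * K0 * X := by
        have h8 : 2 * (C2 * (L + 1)) ≤ 2 * C2 * K0 * X := by nlinarith
        exact le_trans hSle h8
      have hsq : (∑' α : Iset L,
          (τ ^ ((((α : ℕ × ℕ).1 : ℝ) * (1 + γ - s) / 2 + ((α : ℕ × ℕ).2 : ℝ) * (γ - s) / 2)) +
           τ ^ ((((α : ℕ × ℕ).1 : ℝ) * (γ - s) / 2 + ((α : ℕ × ℕ).2 : ℝ) * (γ - s) / 2)))) ^ 2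
          ≤ (2 * C2 * K0 * X) ^ 2 := pow_le_pow_left₀ (hSnn L) hSle2 2
      calc TOL ^ (-2:ℝ) * (∑' α : Iset L,
            (τ ^ ((((α : ℕ × ℕ).1 : ℝ) * (1 + γ - s) / 2 + ((α : ℕ × ℕ).2 : ℝ) * (γ - s) / 2)) +
             τ ^ ((((α : ℕ × ℕ).1 : ℝ) * (γ - s) / 2 + ((α : ℕ × ℕ).2 : ℝ) * (γ - s) / 2)))) ^ 2
          ≤ TOL ^ (-2:ℝ) * (2 * C2 * K0 * X) ^ 2 :=
            mul_le_mul_of_nonneg_left hsq (Real.rpow_nonneg hT.le _)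
        _ = 4 * C2 ^ 2 * K0 ^ 2 * TOL ^ (-2:ℝ) * X ^ 2 := by ring
    · rw [Set.not_nonempty_iff_eq_empty] at hne
      haveI : IsEmpty (Iset L) := by rw [hne]; exact Set.isEmpty_coe_sort.mpr rfl
      rw [tsum_empty]
      have h9 : (0:ℝ) < TOL ^ (-2:ℝ) := Real.rpow_pos_of_pos hT _
      have h10 : (0:ℝ) < 4 * C2 ^ 2 * K0 ^ 2 * TOL ^ (-2:ℝ) * X ^ 2 := by positivity
      calc TOL ^ (-2:ℝ) * (0:ℝ) ^ 2 = 0 := by ring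
        _ ≤ 4 * C2 ^ 2 * K0 ^ 2 * TOL ^ (-2:ℝ) * X ^ 2 := h10.le
  -- CASE 3 : s < 1 + γ
  · intro hcase
    have hw1pos : 0 < (1 + γ - s) / 2 := by linarith
    have hrel : (γ - s) / 2 * δ1 < (1 + γ - s) / 2 * δ2 := by
      rw [hδ1, hδ2, ← mul_div_assoc, ← mul_div_assoc, div_lt_div_iff₀ hD hD]
      nlinarith
    obtain ⟨C3, hC3pos, hC3⟩ := Stmt12.sum_bound_pos hτ hw1pos hδ1pos hδ2pos hrel
    set K2 := (QB * CT) * τ ^ ((b / δ1) * (1 + Real.log 2)) with hK2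
    have hK2pos : 0 < K2 := by
      have h1 := Real.rpow_pos_of_pos h0 ((b / δ1) * (1 + Real.log 2))
      rw [hK2]; positivity
    have hepos : 0 < (1 + γ - s) / b := div_pos (by linarith) hb
    have hK2e : 0 < K2 ^ ((1 + γ - s) / b) := Real.rpow_pos_of_pos hK2pos _
    refine ⟨4 * C3 ^ 2 * K2 ^ ((1 + γ - s) / b), by positivity, ?_⟩
    filter_upwards [self_mem_nhdsWithin] with TOL hT
    replace hT : 0 < TOL := hT
    set L := Lfun TOL with hLdef
    rw [hW TOL hT]
    by_cases hne : (Iset L).Nonempty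
    · have hL0 : 0 ≤ L := hlogL L hne
      haveI := (hfinSet L).to_subtype
      have hpw : ∀ α : (Iset L),
          τ ^ ((((α : ℕ × ℕ).1 : ℝ) * (1 + γ - s) / 2 + ((α : ℕ × ℕ).2 : ℝ) * (γ - s) / 2)) +
          τ ^ ((((α : ℕ × ℕ).1 : ℝ) * (γ - s) / 2 + ((α : ℕ × ℕ).2 : ℝ) * (γ - s) / 2))
          ≤ 2 * τ ^ ((1 + γ - s) / 2 * ((α : ℕ × ℕ).1 : ℝ) +
              (γ - s) / 2 * ((α : ℕ × ℕ).2 : ℝ)) := by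
        intro α
        have he1 : (((α : ℕ × ℕ).1 : ℝ) * (1 + γ - s) / 2 + ((α : ℕ × ℕ).2 : ℝ) * (γ - s) / 2)
            = (1 + γ - s) / 2 * ((α : ℕ × ℕ).1 : ℝ) + (γ - s) / 2 * ((α : ℕ × ℕ).2 : ℝ) := by
          ring
        have hcast : (0:ℝ) ≤ ((α : ℕ × ℕ).1 : ℝ) := Nat.cast_nonneg _
        have he2 : (((α : ℕ × ℕ).1 : ℝ) * (γ - s) / 2 + ((α : ℕ × ℕ).2 : ℝ) * (γ - s) / 2)
            ≤ (1 + γ - s) / 2 * ((α : ℕ × ℕ).1 : ℝ) + (γ - s) / 2 * ((α : ℕ × ℕ).2 : ℝ) := by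
          nlinarith
        rw [he1]
        have hb2 : τ ^ ((((α : ℕ × ℕ).1 : ℝ) * (γ - s) / 2 + ((α : ℕ × ℕ).2 : ℝ) * (γ - s) / 2))
            ≤ τ ^ ((1 + γ - s) / 2 * ((α : ℕ × ℕ).1 : ℝ) + (γ - s) / 2 * ((α : ℕ × ℕ).2 : ℝ)) :=
          (Real.rpow_le_rpow_left_iff hτ).mpr he2
        linarith
      have hSle : (∑' α : Iset L,
          (τ ^ ((((α : ℕ × ℕ).1 : ℝ) * (1 + γ - s) / 2 + ((α : ℕ × ℕ).2 : ℝ) * (γ - s) / 2)) +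
           τ ^ ((((α : ℕ × ℕ).1 : ℝ) * (γ - s) / 2 + ((α : ℕ × ℕ).2 : ℝ) * (γ - s) / 2))))
          ≤ 2 * (C3 * τ ^ ((1 + γ - s) / 2 / δ1 * L)) := by
        calc (∑' α : Iset L,
            (τ ^ ((((α : ℕ × ℕ).1 : ℝ) * (1 + γ - s) / 2 + ((α : ℕ × ℕ).2 : ℝ) * (γ - s) / 2)) +
             τ ^ ((((α : ℕ × ℕ).1 : ℝ) * (γ - s) / 2 + ((α : ℕ × ℕ).2 : ℝ) * (γ - s) / 2))))
            ≤ ∑' α : Iset L, 2 * τ ^ ((1 + γ - s) / 2 * ((α : ℕ × ℕ).1 : ℝ) +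
                (γ - s) / 2 * ((α : ℕ × ℕ).2 : ℝ)) :=
              Summable.tsum_le_tsum hpw Summable.of_finite Summable.of_finite
          _ = 2 * ∑' α : Iset L, τ ^ ((1 + γ - s) / 2 * ((α : ℕ × ℕ).1 : ℝ) +
                (γ - s) / 2 * ((α : ℕ × ℕ).2 : ℝ)) := tsum_mul_left
          _ ≤ 2 * (C3 * τ ^ ((1 + γ - s) / 2 / δ1 * L)) := by
              have := hC3 L hL0 (Iset L) (hmem L)
              linarith
      have hkey2 : TOL < K2 * τ ^ (-(b / δ1) * L) := by
        have h1 := hkey TOL hT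
        have he : -(b / δ1) * (Lfun TOL - 1 - Real.log 2)
            = (b / δ1) * (1 + Real.log 2) + (-(b / δ1) * Lfun TOL) := by ring
        rw [he, Real.rpow_add h0] at h1
        calc TOL < QB * CT * (τ ^ ((b / δ1) * (1 + Real.log 2)) * τ ^ (-(b / δ1) * Lfun TOL)) :=
              h1
          _ = K2 * τ ^ (-(b / δ1) * L) := by rw [hK2, hLdef]; ring
      have hmain : τ ^ ((b / δ1) * L) < K2 / TOL := by
        have hpos1 : (0:ℝ) < τ ^ ((b / δ1) * L) := Real.rpow_pos_of_pos h0 _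
        have hprod : τ ^ (-(b / δ1) * L) * τ ^ ((b / δ1) * L) = 1 := by
          rw [← Real.rpow_add h0, show -(b / δ1) * L + (b / δ1) * L = 0 by ring, Real.rpow_zero]
        rw [lt_div_iff₀ hT]
        have h2 := mul_lt_mul_of_pos_right hkey2 hpos1
        have h3 : K2 * τ ^ (-(b / δ1) * L) * τ ^ ((b / δ1) * L) = K2 := by
          rw [mul_assoc, hprod, mul_one]
        rw [h3] at h2
        calc τ ^ ((b / δ1) * L) * TOL = TOL * τ ^ ((b / δ1) * L) := by ring
          _ < K2 := h2
      have hpow : τ ^ ((1 + γ - s) / δ1 * L) ≤ (K2 / TOL) ^ ((1 + γ - s) / b) := by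
        have h4 : (τ ^ ((b / δ1) * L)) ^ ((1 + γ - s) / b)
            ≤ (K2 / TOL) ^ ((1 + γ - s) / b) :=
          Real.rpow_le_rpow (Real.rpow_nonneg h0.le _) hmain.le hepos.le
        have h5 : (τ ^ ((b / δ1) * L)) ^ ((1 + γ - s) / b) = τ ^ ((1 + γ - s) / δ1 * L) := by
          rw [← Real.rpow_mul h0.le]
          congr 1
          field_simp
        rw [h5] at h4
        exact h4
      have h7 : (K2 / TOL) ^ ((1 + γ - s) / b)
          = K2 ^ ((1 + γ - s) / b) * TOL ^ (-((1 + γ - s) / b)) := by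
        rw [Real.div_rpow hK2pos.le hT.le, Real.rpow_neg hT.le, div_eq_mul_inv]
      have hsq2 : (2 * (C3 * τ ^ ((1 + γ - s) / 2 / δ1 * L))) ^ 2
          = 4 * C3 ^ 2 * τ ^ ((1 + γ - s) / δ1 * L) := by
        have h6 : (τ ^ ((1 + γ - s) / 2 / δ1 * L)) ^ (2:ℕ) = τ ^ ((1 + γ - s) / δ1 * L) := by
          rw [← Real.rpow_natCast (τ ^ ((1 + γ - s) / 2 / δ1 * L)) 2, ← Real.rpow_mul h0.le]
          congr 1
          push_cast
          ring
        calc (2 * (C3 * τ ^ ((1 + γ - s) / 2 / δ1 * L))) ^ 2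
            = 4 * C3 ^ 2 * (τ ^ ((1 + γ - s) / 2 / δ1 * L)) ^ (2:ℕ) := by ring
          _ = 4 * C3 ^ 2 * τ ^ ((1 + γ - s) / δ1 * L) := by rw [h6]
      have hsq : (∑' α : Iset L,
          (τ ^ ((((α : ℕ × ℕ).1 : ℝ) * (1 + γ - s) / 2 + ((α : ℕ × ℕ).2 : ℝ) * (γ - s) / 2)) +
           τ ^ ((((α : ℕ × ℕ).1 : ℝ) * (γ - s) / 2 + ((α : ℕ × ℕ).2 : ℝ) * (γ - s) / 2)))) ^ 2
          ≤ 4 * C3 ^ 2 * τ ^ ((1 + γ - s) / δ1 * L) := by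
        have := pow_le_pow_left₀ (hSnn L) hSle 2
        rw [hsq2] at this
        exact this
      calc TOL ^ (-2:ℝ) * (∑' α : Iset L,
            (τ ^ ((((α : ℕ × ℕ).1 : ℝ) * (1 + γ - s) / 2 + ((α : ℕ × ℕ).2 : ℝ) * (γ - s) / 2)) +
             τ ^ ((((α : ℕ × ℕ).1 : ℝ) * (γ - s) / 2 + ((α : ℕ × ℕ).2 : ℝ) * (γ - s) / 2)))) ^ 2
          ≤ TOL ^ (-2:ℝ) * (4 * C3 ^ 2 * τ ^ ((1 + γ - s) / δ1 * L)) :=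
            mul_le_mul_of_nonneg_left hsq (Real.rpow_nonneg hT.le _)
        _ ≤ TOL ^ (-2:ℝ) * (4 * C3 ^ 2 *
              (K2 ^ ((1 + γ - s) / b) * TOL ^ (-((1 + γ - s) / b)))) := by
            apply mul_le_mul_of_nonneg_left _ (Real.rpow_nonneg hT.le _)
            apply mul_le_mul_of_nonneg_left _ (by positivity)
            rw [← h7]
            exact hpow
        _ = (4 * C3 ^ 2 * K2 ^ ((1 + γ - s) / b)) *
              (TOL ^ (-2:ℝ) * TOL ^ (-((1 + γ - s) / b))) := by ring
        _ = (4 * C3 ^ 2 * K2 ^ ((1 + γ - s) / b)) * TOL ^ (-(2 + (1 + γ - s) / b)) := by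
            rw [← Real.rpow_add hT,
              show (-2:ℝ) + -((1 + γ - s) / b) = -(2 + (1 + γ - s) / b) by ring]
    · rw [Set.not_nonempty_iff_eq_empty] at hne
      haveI : IsEmpty (Iset L) := by rw [hne]; exact Set.isEmpty_coe_sort.mpr rfl
      rw [tsum_empty]
      have h9 : (0:ℝ) < TOL ^ (-(2 + (1 + γ - s) / b)) := Real.rpow_pos_of_pos hT _
      calc TOL ^ (-2:ℝ) * (0:ℝ) ^ 2 = 0 := by ring
        _ ≤ 4 * C3 ^ 2 * K2 ^ ((1 + γ - s) / b) * TOL ^ (-(2 + (1 + γ - s) / b)) := by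
            positivity
end
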